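/- Let {h^i}_{i=1}^d ⊆ {0,1}^t be a Gray code for d numbers, and let i', i'', i''+1 ∈ {1,...,d} be three distinct indices. Then there exists a coordinate j ∈ {1,...,t} such that 1 - h^{i'}_j = h^{i''}_j = h^{i''+1}_j. -/
import Mathlib


/-- A Gray code for `d` numbers: a sequence `h 0, ..., h (d-1)` of pairwise distinct
binary vectors in `{0,1}^t` in which every pair of consecutive vectors differs in
exactly one coordinate. -/
def IsGrayCode (d t : ℕ) (h : ℕ → Fin t → Bool) : Prop :=
  (∀ i j, i < d → j < d → i ≠ j → h i ≠ h j) ∧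
  (∀ i, i + 1 < d → (Finset.univ.filter fun j => h i j ≠ h (i + 1) j).card = 1)

/-- If `i'`, `i''`, `i''+1` are three distinct indices of a Gray code, then there is a
coordinate `j` with `1 - h^{i'}_j = h^{i''}_j = h^{i''+1}_j`. -/
theorem gray_code_three_indices (d t : ℕ) (h : ℕ → Fin t → Bool)
    (hg : IsGrayCode d t h) (i' i'' : ℕ) (h1 : i' < d) (h2 : i'' + 1 < d)
    (h3 : i' ≠ i'') (h4 : i' ≠ i'' + 1) :
    ∃ j : Fin t, h i' j ≠ h i'' j ∧ h i'' j = h (i'' + 1) j := by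
  obtain ⟨hdist, hcons⟩ := hg
  by_contra hc
  push_neg at hc
  -- The set of coordinates where h i'' and h (i''+1) differ is a singleton {js}
  obtain ⟨js, hjs⟩ := Finset.card_eq_one.mp (hcons i'' h2)
  have hmem : ∀ k : Fin t, h i'' k ≠ h (i'' + 1) k ↔ k = js := by
    intro k
    constructor
    · intro hne
      have hk : k ∈ Finset.univ.filter fun j => h i'' j ≠ h (i'' + 1) j := by
        simp [hne]
      rw [hjs] at hk
      simpa using hk
    · intro hk
      have hk2 : js ∈ Finset.univ.filter fun j => h i'' j ≠ h (i'' + 1) j := by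
        rw [hjs]; simp
      rw [hk]
      simpa using hk2
  -- h i' ≠ h i'', so they differ somewhere; that coordinate must be js
  have hne := hdist i' i'' h1 (Nat.lt_of_succ_lt h2) h3
  have hdiff : ∃ k, h i' k ≠ h i'' k := by
    by_contra hall
    push_neg at hall
    exact hne (funext hall)
  obtain ⟨j0, hj0⟩ := hdiff
  have hj0js : j0 = js := (hmem j0).mp (hc j0 hj0)
  rw [hj0js] at hj0
  -- Now show h i' = h (i''+1)
  have heq : h i' = h (i'' + 1) := by
    funext k
    by_cases hk : k = js
    · subst hk
      have hA : h i'' k ≠ h (i'' + 1) k := (hmem k).mpr rfl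
      revert hj0 hA
      cases h i' k <;> cases h i'' k <;> cases h (i'' + 1) k <;> simp
    · have hB : h i'' k = h (i'' + 1) k := by
        by_contra hB
        exact hk ((hmem k).mp hB)
      have hA : h i' k = h i'' k := by
        by_contra hA
        exact hk ((hmem k).mp (hc k hA))
      rw [hA, hB]
  exact hdist i' (i'' + 1) h1 h2 h4 heq
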